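/- Let P be a probability measure on ℕ → Bool (with the product σ-algebra) that is exchangeable, i.e., invariant under the coordinate permutation induced by every permutation of ℕ with finite support. Then there exists a probability measure μ on the interval [0,1] such that for every measurable A, P(A) = ∫_0^1 Bernoulli(θ)^{⊗ℕ}(A) dμ(θ), where Bernoulli(θ)^{⊗ℕ} is the product measure on ℕ → Bool under which the coordinates are i.i.d. Bernoulli with parameter θ. -/

import Mathlib

open MeasureTheory

/-- The Bernoulli measure on `Bool` with mass `θ` on `true` and `1 - θ` on `false`. -/
noncomputable def bernoulliMeasure (θ : ℝ) : Measure Bool :=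
  ENNReal.ofReal θ • Measure.dirac true + ENNReal.ofReal (1 - θ) • Measure.dirac false

/-- `Q` is the i.i.d. product measure on `ι → X` with common coordinate law `Λ`,
characterized by its finite-dimensional cylinder probabilities. -/
def IsIIDProduct {ι X : Type*} [MeasurableSpace X] (Λ : Measure X)
    (Q : Measure (ι → X)) : Prop :=
  IsProbabilityMeasure Q ∧
    ∀ (s : Finset ι) (B : ι → Set X), (∀ i, MeasurableSet (B i)) →
      Q {x | ∀ i ∈ s, x i ∈ B i} = ∏ i ∈ s, Λ (B i)

open Set Filter
open scoped Classical ENNReal Topology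

namespace DeFinettiAux

variable (θ : ℝ)

/-- one step of the θ-adic expansion -/
noncomputable def step (t : ℝ) : ℝ := if t < θ then t / θ else (t - θ) / (1 - θ)

/-- the n-th digit -/
noncomputable def dig (n : ℕ) (u : ℝ) : Bool := decide ((step θ)^[n] u < θ)

noncomputable def pmass (b : Bool) : ℝ := if b then θ else 1 - θ

noncomputable def len (w : ℕ → Bool) (n : ℕ) : ℝ := ∏ k ∈ Finset.range n, pmass θ (w k)

noncomputable def lo (w : ℕ → Bool) : ℕ → ℝ
  | 0 => 0
  | n + 1 => lo w n + (if w n then 0 else θ * len θ w n)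

variable {θ}

lemma pmass_nonneg (h0 : 0 ≤ θ) (h1 : θ ≤ 1) (b : Bool) : 0 ≤ pmass θ b := by
  cases b <;> simp [pmass] <;> linarith

lemma len_nonneg (h0 : 0 ≤ θ) (h1 : θ ≤ 1) (w : ℕ → Bool) (n : ℕ) : 0 ≤ len θ w n :=
  Finset.prod_nonneg fun k _ => pmass_nonneg h0 h1 _

lemma len_succ (w : ℕ → Bool) (n : ℕ) :
    len θ w (n + 1) = len θ w n * pmass θ (w n) := by
  simp [len, Finset.prod_range_succ]

/-- main structure lemma by induction -/
lemma digit_interval (h0 : 0 ≤ θ) (h1 : θ ≤ 1) (w : ℕ → Bool) : ∀ n : ℕ,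
    (∀ u ∈ Ico (0:ℝ) 1,
      ((∀ k < n, dig θ k u = w k) ↔ u ∈ Ico (lo θ w n) (lo θ w n + len θ w n))) ∧
    (∀ u ∈ Ico (lo θ w n) (lo θ w n + len θ w n),
      (step θ)^[n] u = (u - lo θ w n) / len θ w n) := by
  intro n
  induction n with
  | zero =>
    constructor
    · intro u hu; simp [lo, len, hu.1, hu.2]
    · intro u hu; simp [lo, len]
  | succ n ih =>
    obtain ⟨ih1, ih2⟩ := ih
    have hlen : 0 ≤ len θ w n := len_nonneg h0 h1 w n
    -- basic facts on the sub-interval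
    have key : ∀ u ∈ Ico (lo θ w n) (lo θ w n + len θ w n),
        (dig θ n u = w n ↔ u ∈ Ico (lo θ w (n+1)) (lo θ w (n+1) + len θ w (n+1))) ∧
        (u ∈ Ico (lo θ w (n+1)) (lo θ w (n+1) + len θ w (n+1)) →
          (step θ)^[n+1] u = (u - lo θ w (n+1)) / len θ w (n+1)) := by
      intro u hu
      have hlpos : 0 < len θ w n := by
        rcases hu with ⟨h1', h2'⟩; nlinarith
      have hr : (step θ)^[n] u = (u - lo θ w n) / len θ w n := ih2 u hu
      have hdig : dig θ n u = decide (u < lo θ w n + θ * len θ w n) := by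
        unfold dig
        rw [hr]
        simp only [decide_eq_decide]
        rw [div_lt_iff₀ hlpos]
        constructor <;> intro h <;> nlinarith [hu.1, hu.2]
      have hstep : (step θ)^[n+1] u = step θ ((step θ)^[n] u) :=
        Function.iterate_succ_apply' _ _ _
      cases hwn : w n with
      | true =>
        have hlo1 : lo θ w (n+1) = lo θ w n := by simp [lo, hwn]
        have hlen1 : len θ w (n+1) = len θ w n * θ := by simp [len_succ, pmass, hwn]
        constructor
        · rw [hdig, hlo1, hlen1]
          simp only [decide_eq_true_eq, mem_Ico]
          constructor
          · intro h; exact ⟨hu.1, by nlinarith⟩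
          · intro h; nlinarith [h.2]
        · intro hu'
          rw [hlo1, hlen1] at hu' ⊢
          have hθpos : 0 < θ := by
            rcases hu' with ⟨a, b⟩; nlinarith
          rw [hstep, hr]
          unfold step
          have hlt : (u - lo θ w n) / len θ w n < θ := by
            rw [div_lt_iff₀ hlpos]; nlinarith [hu'.2]
          rw [if_pos hlt]
          field_simp
          try ring
      | false =>
        have hlo1 : lo θ w (n+1) = lo θ w n + θ * len θ w n := by simp [lo, hwn]
        have hlen1 : len θ w (n+1) = len θ w n * (1 - θ) := by simp [len_succ, pmass, hwn]
        constructor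
        · rw [hdig, hlo1, hlen1]
          simp only [decide_eq_false_iff_not, not_lt, mem_Ico]
          constructor
          · intro h; exact ⟨h, by nlinarith [hu.2]⟩
          · intro h; exact h.1
        · intro hu'
          rw [hlo1, hlen1] at hu' ⊢
          have hθlt : θ < 1 := by
            rcases hu' with ⟨a, b⟩; nlinarith
          rw [hstep, hr]
          unfold step
          have hge : ¬ ((u - lo θ w n) / len θ w n < θ) := by
            rw [not_lt, le_div_iff₀ hlpos]; nlinarith [hu'.1]
          rw [if_neg hge]
          field_simp
          try ring
    have hsub : Ico (lo θ w (n+1)) (lo θ w (n+1) + len θ w (n+1)) ⊆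
        Ico (lo θ w n) (lo θ w n + len θ w n) := by
      intro u hu
      have hp := pmass_nonneg h0 h1 (w n)
      cases hwn : w n with
      | true =>
        have hlo1 : lo θ w (n+1) = lo θ w n := by simp [lo, hwn]
        have hlen1 : len θ w (n+1) = len θ w n * θ := by simp [len_succ, pmass, hwn]
        rw [hlo1, hlen1] at hu
        exact ⟨hu.1, by nlinarith [hu.2]⟩
      | false =>
        have hlo1 : lo θ w (n+1) = lo θ w n + θ * len θ w n := by simp [lo, hwn]
        have hlen1 : len θ w (n+1) = len θ w n * (1 - θ) := by simp [len_succ, pmass, hwn]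
        rw [hlo1, hlen1] at hu
        constructor
        · nlinarith [hu.1]
        · nlinarith [hu.2]
    constructor
    · intro u hu
      constructor
      · intro h
        have h1' : ∀ k < n, dig θ k u = w k := fun k hk => h k (Nat.lt_succ_of_lt hk)
        have hmem : u ∈ Ico (lo θ w n) (lo θ w n + len θ w n) := (ih1 u hu).1 h1'
        exact ((key u hmem).1).1 (h n (Nat.lt_succ_self n))
      · intro h
        have hmem := hsub h
        intro k hk
        rcases Nat.lt_succ_iff_lt_or_eq.1 hk with hk' | hk'
        · exact (ih1 u hu).2 hmem k hk'
        · subst hk'; exact ((key u hmem).1).2 h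
    · intro u hu
      exact (key u (hsub hu)).2 hu

lemma interval_in_unit (h0 : 0 ≤ θ) (h1 : θ ≤ 1) (w : ℕ → Bool) (n : ℕ) :
    0 ≤ lo θ w n ∧ lo θ w n + len θ w n ≤ 1 := by
  induction n with
  | zero => simp [lo, len]
  | succ n ih =>
    have hlen : 0 ≤ len θ w n := len_nonneg h0 h1 w n
    cases hwn : w n with
    | true =>
      have hlo1 : lo θ w (n+1) = lo θ w n := by simp [lo, hwn]
      have hlen1 : len θ w (n+1) = len θ w n * θ := by simp [len_succ, pmass, hwn]
      rw [hlo1, hlen1]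
      exact ⟨ih.1, by nlinarith [ih.2]⟩
    | false =>
      have hlo1 : lo θ w (n+1) = lo θ w n + θ * len θ w n := by simp [lo, hwn]
      have hlen1 : len θ w (n+1) = len θ w n * (1 - θ) := by simp [len_succ, pmass, hwn]
      rw [hlo1, hlen1]
      exact ⟨by nlinarith [ih.1], by nlinarith [ih.2]⟩

/-- the cylinder set in [0,1) given by digits -/
lemma digit_set_eq (h0 : 0 ≤ θ) (h1 : θ ≤ 1) (w : ℕ → Bool) (n : ℕ) :
    {u : ℝ | u ∈ Ico (0:ℝ) 1 ∧ ∀ k < n, dig θ k u = w k} =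
      Ico (lo θ w n) (lo θ w n + len θ w n) := by
  ext u
  simp only [mem_setOf_eq]
  constructor
  · rintro ⟨hu, h⟩
    exact ((digit_interval h0 h1 w n).1 u hu).1 h
  · intro h
    have h0' := interval_in_unit h0 h1 w n
    have hu : u ∈ Ico (0:ℝ) 1 := ⟨le_trans h0'.1 h.1, lt_of_lt_of_le h.2 h0'.2⟩
    exact ⟨hu, ((digit_interval h0 h1 w n).1 u hu).2 h⟩

lemma vol_digit_set (h0 : 0 ≤ θ) (h1 : θ ≤ 1) (w : ℕ → Bool) (n : ℕ) :
    volume {u : ℝ | u ∈ Ico (0:ℝ) 1 ∧ ∀ k < n, dig θ k u = w k} =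
      ENNReal.ofReal (len θ w n) := by
  rw [digit_set_eq h0 h1, Real.volume_Ico]
  congr 1; ring

end DeFinettiAux

namespace DeFinettiAux
open scoped Classical

variable (θ : ℝ)

lemma measurable_step : Measurable (step θ) := by
  unfold step
  exact Measurable.ite (measurableSet_lt measurable_id measurable_const)
    (measurable_id.div_const θ) ((measurable_id.sub_const θ).div_const (1 - θ))

lemma measurable_dig (n : ℕ) : Measurable (dig θ n) := by
  have h1 : Measurable ((step θ)^[n]) := (measurable_step θ).iterate n
  have h2 : Measurable (fun t : ℝ => decide (t < θ)) := by
    apply measurable_to_countable'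
    intro b
    cases b
    · have : (fun t : ℝ => decide (t < θ)) ⁻¹' {false} = Ici θ := by
        ext t; simp [decide_eq_false_iff_not]
      exact this ▸ measurableSet_Ici
    · have : (fun t : ℝ => decide (t < θ)) ⁻¹' {true} = Iio θ := by
        ext t; simp
      exact this ▸ measurableSet_Iio
  exact h2.comp h1

/-- the expansion map -/
noncomputable def expand (u : ℝ) : ℕ → Bool := fun n => dig θ n u

lemma measurable_expand : Measurable (expand θ) :=
  measurable_pi_lambda _ fun n => measurable_dig θ n

/-- the candidate iid Bernoulli product measure -/
noncomputable def Qm : Measure (ℕ → Bool) :=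
  Measure.map (expand θ) (volume.restrict (Ico (0:ℝ) 1))

/-- total mass of a subset of Bool -/
noncomputable def mass (B : Set Bool) : ℝ :=
  (if true ∈ B then θ else 0) + (if false ∈ B then 1 - θ else 0)

lemma bernoulli_apply (h0 : 0 ≤ θ) (h1 : θ ≤ 1) (B : Set Bool) :
    bernoulliMeasure θ B = ENNReal.ofReal (mass θ B) := by
  have hB : MeasurableSet B := by measurability
  rw [bernoulliMeasure, Measure.add_apply, Measure.smul_apply, Measure.smul_apply,
    Measure.dirac_apply' _ hB, Measure.dirac_apply' _ hB]
  unfold mass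
  rw [ENNReal.ofReal_add (by by_cases h : true ∈ B <;> simp [h] <;> linarith)
    (by by_cases h : false ∈ B <;> simp [h] <;> linarith)]
  simp only [Set.indicator, smul_eq_mul]
  by_cases ht : true ∈ B <;> by_cases hf : false ∈ B <;>
    simp [ht, hf, ENNReal.ofReal_le_one, mul_one, mul_zero]

lemma mass_nonneg (h0 : 0 ≤ θ) (h1 : θ ≤ 1) (B : Set Bool) : 0 ≤ mass θ B := by
  unfold mass
  have a : (0:ℝ) ≤ if true ∈ B then θ else 0 := by by_cases h : true ∈ B <;> simp [h] <;> linarith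
  have b : (0:ℝ) ≤ if false ∈ B then 1 - θ else 0 := by
    by_cases h : false ∈ B <;> simp [h] <;> linarith
  linarith

lemma mass_univ : mass θ univ = 1 := by simp [mass]

variable {θ}

lemma measurableSet_cylB (n : ℕ) (β : ℕ → Set Bool) :
    MeasurableSet {x : ℕ → Bool | ∀ i < n, x i ∈ β i} := by
  have : {x : ℕ → Bool | ∀ i < n, x i ∈ β i} =
      ⋂ i ∈ {i | i < n}, (fun x : ℕ → Bool => x i) ⁻¹' (β i) := by
    ext x; simp
  rw [this]
  exact MeasurableSet.biInter (to_countable _)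
    (fun i _ => (measurable_pi_apply i) (by measurability))

/-- finite-dimensional distributions of Qm -/
lemma Qm_cylinder (h0 : 0 ≤ θ) (h1 : θ ≤ 1) (n : ℕ) (β : ℕ → Set Bool) :
    Qm θ {x : ℕ → Bool | ∀ i < n, x i ∈ β i} =
      ∏ i ∈ Finset.range n, ENNReal.ofReal (mass θ (β i)) := by
  rw [Qm, Measure.map_apply (measurable_expand θ) (measurableSet_cylB n β)]
  have hpre : expand θ ⁻¹' {x : ℕ → Bool | ∀ i < n, x i ∈ β i} =
      {u : ℝ | ∀ i < n, dig θ i u ∈ β i} := rfl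
  have hmeas : MeasurableSet {u : ℝ | ∀ i < n, dig θ i u ∈ β i} := by
    have : {u : ℝ | ∀ i < n, dig θ i u ∈ β i} =
        ⋂ i ∈ {i | i < n}, (dig θ i) ⁻¹' (β i) := by ext u; simp
    rw [this]
    exact MeasurableSet.biInter (to_countable _)
      (fun i _ => (measurable_dig θ i) (by measurability))
  rw [hpre, Measure.restrict_apply hmeas]
  -- decompose into pattern cylinders
  set t : Fin n → Finset Bool := fun i => Finset.univ.filter (· ∈ β i) with ht
  set ext : (Fin n → Bool) → (ℕ → Bool) :=
    fun v k => if h : k < n then v ⟨k, h⟩ else false with hext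
  have hdecomp : {u : ℝ | ∀ i < n, dig θ i u ∈ β i} ∩ Ico (0:ℝ) 1 =
      ⋃ v ∈ Fintype.piFinset t,
        {u : ℝ | u ∈ Ico (0:ℝ) 1 ∧ ∀ k < n, dig θ k u = ext v k} := by
    ext u
    simp only [mem_inter_iff, mem_setOf_eq, mem_iUnion, Fintype.mem_piFinset, ht,
      Finset.mem_filter, Finset.mem_univ, true_and]
    constructor
    · rintro ⟨hd, hu⟩
      refine ⟨fun i => dig θ i.1 u, fun i => hd i.1 i.2, hu, fun k hk => ?_⟩
      simp [hext, hk]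
    · rintro ⟨v, hv, hu, hd⟩
      refine ⟨fun i hi => ?_, hu⟩
      have := hd i hi
      rw [this]
      simpa [hext, hi] using hv ⟨i, hi⟩
  rw [hdecomp, measure_biUnion_finset]
  · -- sum of interval lengths
    have hterm : ∀ v ∈ Fintype.piFinset t,
        volume {u : ℝ | u ∈ Ico (0:ℝ) 1 ∧ ∀ k < n, dig θ k u = ext v k} =
          ENNReal.ofReal (∏ i : Fin n, pmass θ (v i)) := by
      intro v _
      rw [vol_digit_set h0 h1]
      congr 1
      unfold len
      rw [← Fin.prod_univ_eq_prod_range (fun k => pmass θ (ext v k)) n]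
      apply Finset.prod_congr rfl
      intro i _
      congr 1
      simp [hext, i.isLt]
    rw [Finset.sum_congr rfl hterm,
      ← ENNReal.ofReal_sum_of_nonneg
        (fun v _ => Finset.prod_nonneg fun i _ => pmass_nonneg h0 h1 _),
      ← ENNReal.ofReal_prod_of_nonneg (fun i _ => mass_nonneg θ h0 h1 _)]
    congr 1
    rw [← Fin.prod_univ_eq_prod_range (fun i => mass θ (β i)) n,
      ← Finset.prod_univ_sum t (fun i b => pmass θ b)]
    apply Finset.prod_congr rfl
    intro i _
    rw [ht]
    simp only [Finset.sum_filter, Fintype.sum_bool]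
    unfold mass pmass
    simp
  · -- pairwise disjoint
    intro v hv v' hv' hne
    simp only [Function.onFun]
    apply Set.disjoint_left.2
    rintro u ⟨hu1, hd1⟩ ⟨hu2, hd2⟩
    apply hne
    funext i
    have := (hd1 i.1 i.2).symm.trans (hd2 i.1 i.2)
    simpa [hext, i.isLt] using this
  · intro v _
    rw [digit_set_eq h0 h1]
    exact measurableSet_Ico

end DeFinettiAux

namespace DeFinettiAux
open scoped Classical

lemma Qm_prob (θ : ℝ) (h0 : 0 ≤ θ) (h1 : θ ≤ 1) : IsProbabilityMeasure (Qm θ) := by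
  constructor
  rw [Qm, Measure.map_apply (measurable_expand θ) MeasurableSet.univ]
  simp [Real.volume_Ico]

theorem Qm_isIIDProduct {θ : ℝ} (h0 : 0 ≤ θ) (h1 : θ ≤ 1) :
    IsIIDProduct (bernoulliMeasure θ) (Qm θ) := by
  refine ⟨Qm_prob θ h0 h1, fun s B _ => ?_⟩
  set n := (s.sup id) + 1 with hn
  have hsn : ∀ i ∈ s, i < n := fun i hi =>
    Nat.lt_succ_of_le (Finset.le_sup (f := id) hi)
  set β : ℕ → Set Bool := fun i => if i ∈ s then B i else univ with hβ
  have hset : {x : ℕ → Bool | ∀ i ∈ s, x i ∈ B i} = {x : ℕ → Bool | ∀ i < n, x i ∈ β i} := by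
    ext x
    simp only [mem_setOf_eq, hβ]
    constructor
    · intro h i _
      by_cases hi : i ∈ s
      · simpa [hi] using h i hi
      · simp [hi]
    · intro h i hi
      have := h i (hsn i hi)
      simpa [hi] using this
  rw [hset, Qm_cylinder h0 h1 n β]
  have hsub : s ⊆ Finset.range n := fun i hi => Finset.mem_range.2 (hsn i hi)
  calc ∏ i ∈ Finset.range n, ENNReal.ofReal (mass θ (β i))
      = ∏ i ∈ s, ENNReal.ofReal (mass θ (β i)) := by
        refine (Finset.prod_subset hsub (fun i _ hi => ?_)).symm
        have hu : β i = univ := by simp [hβ, hi]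
        rw [hu, mass_univ]
        simp
    _ = ∏ i ∈ s, bernoulliMeasure θ (B i) := by
        refine Finset.prod_congr rfl (fun i hi => ?_)
        rw [bernoulli_apply θ h0 h1]
        congr 1
        simp [hβ, hi]

end DeFinettiAux

namespace DeFinettiAux

/-- glue two subtype equivalences into a permutation -/
noncomputable def permGlue {α : Type*} {p q : α → Prop}
    (e : {x // p x} ≃ {x // q x}) (e' : {x // ¬ p x} ≃ {x // ¬ q x}) : Equiv.Perm α where
  toFun a := if h : p a then e ⟨a, h⟩ else e' ⟨a, h⟩
  invFun a := if h : q a then e.symm ⟨a, h⟩ else e'.symm ⟨a, h⟩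
  left_inv a := by
    dsimp only
    by_cases h : p a
    · rw [dif_pos h, dif_pos (e ⟨a, h⟩).2, Subtype.coe_eta, Equiv.symm_apply_apply]
    · rw [dif_neg h, dif_neg (e' ⟨a, h⟩).2, Subtype.coe_eta, Equiv.symm_apply_apply]
  right_inv a := by
    dsimp only
    by_cases h : q a
    · rw [dif_pos h, dif_pos (e.symm ⟨a, h⟩).2, Subtype.coe_eta, Equiv.apply_symm_apply]
    · rw [dif_neg h, dif_neg (e'.symm ⟨a, h⟩).2, Subtype.coe_eta, Equiv.apply_symm_apply]

lemma permGlue_pos {α : Type*} {p q : α → Prop}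
    (e : {x // p x} ≃ {x // q x}) (e' : {x // ¬ p x} ≃ {x // ¬ q x}) {a : α} (h : p a) :
    permGlue e e' a = e ⟨a, h⟩ := dif_pos h

lemma permGlue_neg {α : Type*} {p q : α → Prop}
    (e : {x // p x} ≃ {x // q x}) (e' : {x // ¬ p x} ≃ {x // ¬ q x}) {a : α} (h : ¬ p a) :
    permGlue e e' a = e' ⟨a, h⟩ := dif_neg h

/-- sorting permutation -/
lemma exists_sort_perm {m : ℕ} (w : Fin m → Bool) :
    ∃ ρ : Equiv.Perm (Fin m), ∀ r : Fin m,
      w (ρ r) = decide ((r : ℕ) < (Finset.univ.filter (fun r => w r = true)).card) := by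
  set k := (Finset.univ.filter (fun r => w r = true)).card with hk
  have hkm : k ≤ m := by
    rw [hk]
    exact le_trans (Finset.card_filter_le _ _) (by simp)
  have hcardA : (Finset.univ.filter (fun r : Fin m => (r : ℕ) < k)).card = k := by
    rw [Finset.card_bij' (fun (r : Fin m) _ => (r : ℕ))
      (fun (i : ℕ) (hi : i ∈ Finset.range k) =>
        (⟨i, lt_of_lt_of_le (Finset.mem_range.1 hi) hkm⟩ : Fin m))]
    · exact Finset.card_range k
    · intro a ha
      simp only [Finset.mem_filter] at ha
      simpa using ha.2
    · intro a ha
      simp only [Finset.mem_filter]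
      exact ⟨by simp, by simpa using ha⟩
    · intro a ha; simp
    · intro a ha; simp
  have hcards : (Finset.univ.filter (fun r : Fin m => (r : ℕ) < k)).card =
      (Finset.univ.filter (fun r : Fin m => w r = true)).card := by rw [hcardA]
  have hcardsc : (Finset.univ.filter (fun r : Fin m => ¬ ((r : ℕ) < k))).card =
      (Finset.univ.filter (fun r : Fin m => ¬ (w r = true))).card := by
    have h1 := Finset.card_filter_add_card_filter_not
      (s := (Finset.univ : Finset (Fin m))) (p := fun r : Fin m => (r : ℕ) < k)
    have h2 := Finset.card_filter_add_card_filter_not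
      (s := (Finset.univ : Finset (Fin m))) (p := fun r : Fin m => w r = true)
    omega
  have eA : {r : Fin m // (r : ℕ) < k} ≃ {r : Fin m // w r = true} :=
    ((Equiv.subtypeEquivRight (fun x => by simp)).trans
      (Finset.equivOfCardEq hcards)).trans (Equiv.subtypeEquivRight (fun x => by simp))
  have eB : {r : Fin m // ¬ ((r : ℕ) < k)} ≃ {r : Fin m // ¬ (w r = true)} :=
    ((Equiv.subtypeEquivRight (fun x => by simp)).trans
      (Finset.equivOfCardEq hcardsc)).trans (Equiv.subtypeEquivRight (fun x => by simp))
  refine ⟨permGlue eA eB, fun r => ?_⟩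
  by_cases h : (r : ℕ) < k
  · rw [permGlue_pos eA eB h]
    have := (eA ⟨r, h⟩).2
    simp [this, h]
  · rw [permGlue_neg eA eB h]
    have := (eB ⟨r, h⟩).2
    simp only [Bool.not_eq_true] at this
    simp [this, h]

/-- extend matching of two injective tuples to a finitely supported permutation of ℕ -/
lemma exists_perm_comp {m : ℕ} (ι ι' : Fin m → ℕ)
    (hι : Function.Injective ι) (hι' : Function.Injective ι') :
    ∃ σ : Equiv.Perm ℕ, {n | σ n ≠ n}.Finite ∧ ∀ r, σ (ι r) = ι' r := by
  set S : Finset ℕ := (Finset.univ.image ι) ∪ (Finset.univ.image ι') with hS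
  have hmemι : ∀ r, ι r ∈ S := fun r => by
    simp [hS, Finset.mem_union, Finset.mem_image]
  have hmemι' : ∀ r, ι' r ∈ S := fun r => by
    simp [hS, Finset.mem_union, Finset.mem_image]
  set T := {x : ℕ // x ∈ S} with hT
  set f : Fin m → T := fun r => ⟨ι r, hmemι r⟩ with hf
  set g : Fin m → T := fun r => ⟨ι' r, hmemι' r⟩ with hg
  have hfi : Function.Injective f := fun a b hab => hι (congrArg Subtype.val hab)
  have hgi : Function.Injective g := fun a b hab => hι' (congrArg Subtype.val hab)
  set e : {x : T // x ∈ Set.range f} ≃ {x : T // x ∈ Set.range g} :=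
    (Equiv.ofInjective f hfi).symm.trans (Equiv.ofInjective g hgi) with he
  have hcard : Fintype.card {x : T // x ∉ Set.range f} =
      Fintype.card {x : T // x ∉ Set.range g} := by
    have h1 : Fintype.card {x : T // x ∈ Set.range f} =
        Fintype.card {x : T // x ∈ Set.range g} := Fintype.card_congr e
    have h2 := Fintype.card_subtype_compl (p := fun x : T => x ∈ Set.range f)
    have h3 := Fintype.card_subtype_compl (p := fun x : T => x ∈ Set.range g)
    simp only [h2, h3, h1]
  have e' : {x : T // ¬ (x ∈ Set.range f)} ≃ {x : T // ¬ (x ∈ Set.range g)} :=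
    Fintype.equivOfCardEq hcard
  set π : Equiv.Perm T := permGlue e e' with hπ
  refine ⟨π.extendDomain (Equiv.refl T), ?_, ?_⟩
  · apply Set.Finite.subset S.finite_toSet
    intro n hn
    by_contra hns
    exact hn (Equiv.Perm.extendDomain_apply_not_subtype π (Equiv.refl T) hns)
  · intro r
    have h1 : π.extendDomain (Equiv.refl T) (ι r) =
        ((π ((Equiv.refl T).symm ⟨ι r, hmemι r⟩)) : T) :=
      Equiv.Perm.extendDomain_apply_subtype π (Equiv.refl T) (hmemι r)
    rw [h1]
    have h2 : ((Equiv.refl T).symm ⟨ι r, hmemι r⟩) = f r := rfl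
    rw [h2]
    have h3 : π (f r) = e ⟨f r, ⟨r, rfl⟩⟩ := permGlue_pos e e' ⟨r, rfl⟩
    have h5 : (Equiv.ofInjective f hfi).symm ⟨f r, ⟨r, rfl⟩⟩ = r := by
      have h6 : (⟨f r, ⟨r, rfl⟩⟩ : {x : T // x ∈ Set.range f}) = Equiv.ofInjective f hfi r := by
        apply Subtype.ext; rfl
      rw [h6, Equiv.symm_apply_apply]
    rw [h3, he]
    simp only [Equiv.trans_apply, h5, Equiv.ofInjective_apply]
    rfl

/-- finite cylinder sets given by injective index tuples -/
def cyl {m : ℕ} (ι : Fin m → ℕ) (w : Fin m → Bool) : Set (ℕ → Bool) :=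
  {x | ∀ r, x (ι r) = w r}

lemma measurableSet_cyl {m : ℕ} (ι : Fin m → ℕ) (w : Fin m → Bool) :
    MeasurableSet (cyl ι w) := by
  have : cyl ι w = ⋂ r : Fin m, (fun x : ℕ → Bool => x (ι r)) ⁻¹' {w r} := by
    ext x; simp [cyl]
  rw [this]
  exact MeasurableSet.iInter fun r => (measurable_pi_apply (ι r)) (by measurability)

lemma cyl_reindex {m : ℕ} (ι : Fin m → ℕ) (w : Fin m → Bool) (ρ : Equiv.Perm (Fin m)) :
    cyl ι w = cyl (ι ∘ ρ) (w ∘ ρ) := by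
  ext x
  simp only [cyl, mem_setOf_eq, Function.comp]
  constructor
  · intro h r; exact h (ρ r)
  · intro h r
    have := h (ρ.symm r)
    simpa using this

section Exch

variable (P : Measure (ℕ → Bool)) [IsProbabilityMeasure P]
variable (hexch : ∀ σ : Equiv.Perm ℕ, {n | σ n ≠ n}.Finite →
      ∀ A : Set (ℕ → Bool), MeasurableSet A →
        P ((fun x n => x (σ.symm n)) ⁻¹' A) = P A)

include hexch

lemma P_cyl_reindex {m : ℕ} (ι ι' : Fin m → ℕ)
    (hι : Function.Injective ι) (hι' : Function.Injective ι') (w : Fin m → Bool) :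
    P (cyl ι w) = P (cyl ι' w) := by
  obtain ⟨σ, hfin, hσ⟩ := exists_perm_comp ι ι' hι hι'
  have := hexch σ hfin (cyl ι' w) (measurableSet_cyl ι' w)
  rw [← this]
  congr 1
  ext x
  simp only [cyl, mem_preimage, mem_setOf_eq]
  have hsy : ∀ r, σ.symm (ι' r) = ι r := fun r => by
    rw [← hσ r, Equiv.symm_apply_apply]
  constructor
  · intro h r; rw [hsy r]; exact h r
  · intro h r; rw [← hsy r]; exact h r

/-- canonical pattern probability: m coordinates, first k true, rest false -/
noncomputable def cprob (m k : ℕ) : ENNReal :=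
  P (cyl (fun r : Fin m => (r : ℕ)) (fun r => decide ((r : ℕ) < k)))

/-- MASTER: probability of any injective cylinder only depends on counts -/
lemma P_cyl_eq_cprob {m : ℕ} (ι : Fin m → ℕ) (hι : Function.Injective ι)
    (w : Fin m → Bool) :
    P (cyl ι w) = cprob P m ((Finset.univ.filter (fun r => w r = true)).card) := by
  obtain ⟨ρ, hρ⟩ := exists_sort_perm w
  rw [cyl_reindex ι w ρ]
  have hcomp : Function.Injective (ι ∘ ρ) := hι.comp ρ.injective
  have : w ∘ ρ = fun r : Fin m =>
      decide ((r : ℕ) < (Finset.univ.filter (fun r => w r = true)).card) := by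
    funext r; exact hρ r
  rw [this]
  exact P_cyl_reindex P hexch _ _ hcomp (fun a b h => Fin.val_injective h) _

end Exch
end DeFinettiAux

namespace DeFinettiAux

/-- card of an initial segment filter -/
lemma card_filter_lt {m k : ℕ} (hkm : k ≤ m) :
    (Finset.univ.filter (fun r : Fin m => (r : ℕ) < k)).card = k := by
  rw [Finset.card_bij' (fun (r : Fin m) _ => (r : ℕ))
    (fun (i : ℕ) (hi : i ∈ Finset.range k) =>
      (⟨i, lt_of_lt_of_le (Finset.mem_range.1 hi) hkm⟩ : Fin m))]
  · exact Finset.card_range k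
  · intro a ha
    simp only [Finset.mem_filter] at ha
    simpa using ha.2
  · intro a ha
    simp only [Finset.mem_filter]
    exact ⟨by simp, by simpa using ha⟩
  · intro a ha; simp
  · intro a ha; simp


section Exch

variable (P : Measure (ℕ → Bool)) [IsProbabilityMeasure P]

variable (hexch : ∀ σ : Equiv.Perm ℕ, {n | σ n ≠ n}.Finite →
      ∀ A : Set (ℕ → Bool), MeasurableSet A →
        P ((fun x n => x (σ.symm n)) ⁻¹' A) = P A)

/-- real-valued pattern probability -/
noncomputable def cprobR (m k : ℕ) : ℝ := (cprob P m k).toReal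

lemma cprob_ne_top (m k : ℕ) : cprob P m k ≠ ⊤ := measure_ne_top _ _

lemma cprobR_nonneg (m k : ℕ) : 0 ≤ cprobR P m k := ENNReal.toReal_nonneg

lemma cprobR_le_one (m k : ℕ) : cprobR P m k ≤ 1 := by
  rw [cprobR]
  have h := prob_le_one (μ := P) (s := cyl (fun r : Fin m => (r : ℕ))
    (fun r => decide ((r : ℕ) < k)))
  calc (cprob P m k).toReal ≤ (1 : ℝ≥0∞).toReal :=
        ENNReal.toReal_mono (by simp) h
    _ = 1 := by simp

/-- the coordinate indicator -/
noncomputable def Y (i : ℕ) (x : ℕ → Bool) : ℝ := if x i then 1 else 0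

lemma measurable_Y (i : ℕ) : Measurable (Y i) :=
  (measurable_from_top (f := fun b : Bool => if b then (1:ℝ) else 0)).comp
    (measurable_pi_apply i)

lemma Y_nonneg (i : ℕ) (x : ℕ → Bool) : 0 ≤ Y i x := by
  unfold Y; split <;> norm_num

lemma Y_le_one (i : ℕ) (x : ℕ → Bool) : Y i x ≤ 1 := by
  unfold Y; split <;> norm_num

/-- empirical frequency -/
noncomputable def avg (n : ℕ) (x : ℕ → Bool) : ℝ := (∑ i ∈ Finset.range n, Y i x) / n

lemma measurable_avg (n : ℕ) : Measurable (avg n) :=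
  (Finset.measurable_sum _ (fun i _ => measurable_Y i)).div_const _

lemma avg_nonneg (n : ℕ) (x : ℕ → Bool) : 0 ≤ avg n x := by
  apply div_nonneg _ (Nat.cast_nonneg n)
  exact Finset.sum_nonneg fun i _ => Y_nonneg i x

lemma avg_le_one (n : ℕ) (x : ℕ → Bool) : avg n x ≤ 1 := by
  rw [avg, div_le_one_iff]
  rcases Nat.eq_zero_or_pos n with h | h
  · subst h; simp
  · left
    refine ⟨by exact_mod_cast h, ?_⟩
    calc ∑ i ∈ Finset.range n, Y i x ≤ ∑ i ∈ Finset.range n, 1 :=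
          Finset.sum_le_sum fun i _ => Y_le_one i x
      _ = n := by simp

lemma integrable_bdd {f : (ℕ → Bool) → ℝ} (hm : Measurable f) (C : ℝ)
    (hb : ∀ x, |f x| ≤ C) : Integrable f P :=
  (integrable_const C).mono' hm.aestronglyMeasurable (ae_of_all _ (by simpa using hb))

/-- product of Y's along a tuple is the indicator of a cylinder -/
lemma prod_Y_eq_indicator {m a : ℕ} (τ : Fin m → ℕ) (x : ℕ → Bool) :
    (∏ r : Fin m, (if (r : ℕ) < a then Y (τ r) x else 1 - Y (τ r) x)) =
      (cyl τ (fun r => decide ((r : ℕ) < a))).indicator 1 x := by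
  by_cases hx : x ∈ cyl τ (fun r => decide ((r : ℕ) < a))
  · rw [Set.indicator_of_mem hx]
    simp only [Pi.one_apply]
    apply Finset.prod_eq_one
    intro r _
    have hmem := hx r
    by_cases h : (r : ℕ) < a
    · rw [if_pos h]
      have hxt : x (τ r) = true := by simpa [h] using hmem
      unfold Y
      simp [hxt]
    · rw [if_neg h]
      have hxf : x (τ r) = false := by simpa [h] using hmem
      unfold Y
      simp [hxf]
  · rw [Set.indicator_of_notMem hx]
    simp only [cyl, mem_setOf_eq, not_forall] at hx
    obtain ⟨r, hr⟩ := hx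
    apply Finset.prod_eq_zero (Finset.mem_univ r)
    by_cases h : (r : ℕ) < a
    · rw [if_pos h]
      have hxf : x (τ r) = false := by simpa [h] using hr
      unfold Y
      simp [hxf]
    · rw [if_neg h]
      have hxt : x (τ r) = true := by simpa [h] using hr
      unfold Y
      simp [hxt]

lemma integral_prod_Y {m a : ℕ} (τ : Fin m → ℕ) :
    ∫ x, (∏ r : Fin m, (if (r : ℕ) < a then Y (τ r) x else 1 - Y (τ r) x)) ∂P =
      (P (cyl τ (fun r => decide ((r : ℕ) < a)))).toReal := by
  rw [integral_congr_ae (ae_of_all _ (fun x => prod_Y_eq_indicator τ x))]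
  exact integral_indicator_one (measurableSet_cyl _ _)


/-- expansion of the Bernstein-type moment into cylinder probabilities -/
lemma moment_expand (a b n : ℕ) (hn : 0 < n) :
    ∫ x, (avg n x) ^ a * (1 - avg n x) ^ b ∂P =
      ∑ τ ∈ Fintype.piFinset (fun _ : Fin (a + b) => Finset.range n),
        (P (cyl τ (fun r => decide ((r : ℕ) < a)))).toReal / (n : ℝ) ^ (a + b) := by
  set m := a + b with hm
  have hnR : (0:ℝ) < n := by exact_mod_cast hn
  have hpt : ∀ x, (avg n x) ^ a * (1 - avg n x) ^ b =
      ∑ τ ∈ Fintype.piFinset (fun _ : Fin m => Finset.range n),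
        (∏ r : Fin m, (if (r : ℕ) < a then Y (τ r) x else 1 - Y (τ r) x)) / (n : ℝ) ^ m := by
    intro x
    have hfac : ∀ r : Fin m, (if (r : ℕ) < a then avg n x else 1 - avg n x) =
        ∑ i ∈ Finset.range n, (if (r : ℕ) < a then Y i x else 1 - Y i x) / (n:ℝ) := by
      intro r
      by_cases h : (r : ℕ) < a
      · simp only [if_pos h]
        rw [avg, Finset.sum_div]
      · simp only [if_neg h]
        rw [avg, ← Finset.sum_div, Finset.sum_sub_distrib, Finset.sum_const,
          Finset.card_range]
        field_simp
        simp
    have hprod : (avg n x) ^ a * (1 - avg n x) ^ b =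
        ∏ r : Fin m, (if (r : ℕ) < a then avg n x else 1 - avg n x) := by
      rw [Finset.prod_ite (fun _ => avg n x) (fun _ => 1 - avg n x),
        Finset.prod_const, Finset.prod_const, card_filter_lt (by omega : a ≤ m)]
      congr 2
      have h1 := Finset.card_filter_add_card_filter_not
        (s := (Finset.univ : Finset (Fin m))) (p := fun r : Fin m => (r:ℕ) < a)
      have h2 : (Finset.univ.filter (fun r : Fin m => (r:ℕ) < a)).card = a :=
        card_filter_lt (by omega)
      have h3 : (Finset.univ : Finset (Fin m)).card = m := by simp
      omega
    rw [hprod, Finset.prod_congr rfl (fun r _ => hfac r), Finset.prod_univ_sum]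
    apply Finset.sum_congr rfl
    intro tau _
    rw [Finset.prod_div_distrib, Finset.prod_const, Finset.card_univ, Fintype.card_fin]
  have hint : ∀ (tau : Fin m → ℕ), Integrable (fun x =>
      (∏ r : Fin m, (if (r : ℕ) < a then Y (tau r) x else 1 - Y (tau r) x)) / (n : ℝ) ^ m) P := by
    intro tau
    apply Integrable.div_const
    apply integrable_bdd P _ 1
    · intro x
      rw [prod_Y_eq_indicator]
      by_cases hx : x ∈ cyl tau (fun r => decide ((r : ℕ) < a)) <;>
        simp [hx, Set.indicator_of_mem, Set.indicator_of_notMem]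
    · apply Finset.measurable_prod
      intro r _
      by_cases h : (r : ℕ) < a
      · simpa [h] using measurable_Y (tau r)
      · simp only [if_neg h]
        exact measurable_const.sub (measurable_Y (tau r))
  calc ∫ x, (avg n x) ^ a * (1 - avg n x) ^ b ∂P
      = ∫ x, ∑ τ ∈ Fintype.piFinset (fun _ : Fin m => Finset.range n),
        (∏ r : Fin m, (if (r : ℕ) < a then Y (τ r) x else 1 - Y (τ r) x)) / (n : ℝ) ^ m ∂P :=
        integral_congr_ae (ae_of_all _ hpt)
    _ = ∑ τ ∈ Fintype.piFinset (fun _ : Fin m => Finset.range n),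
        ∫ x, (∏ r : Fin m, (if (r : ℕ) < a then Y (τ r) x else 1 - Y (τ r) x)) / (n : ℝ) ^ m ∂P :=
        integral_finset_sum _ (fun τ _ => hint τ)
    _ = ∑ τ ∈ Fintype.piFinset (fun _ : Fin m => Finset.range n),
        (P (cyl τ (fun r => decide ((r : ℕ) < a)))).toReal / (n : ℝ) ^ m := by
        apply Finset.sum_congr rfl
        intro τ _
        rw [integral_div, integral_prod_Y P τ]

/-- counting bound for non-injective tuples -/
lemma noninj_card (m n : ℕ) :
    ((Fintype.piFinset (fun _ : Fin m => Finset.range n)).filter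
      (fun τ => ¬ Function.Injective τ)).card ≤ m * m * n ^ (m - 1) := by
  set pf := Fintype.piFinset (fun _ : Fin m => Finset.range n) with hpf
  have hsub : pf.filter (fun τ => ¬ Function.Injective τ) ⊆
      (Finset.univ : Finset (Fin m × Fin m)).biUnion
        (fun p => pf.filter (fun τ => p.1 ≠ p.2 ∧ τ p.1 = τ p.2)) := by
    intro τ hτ
    rw [Finset.mem_filter] at hτ
    obtain ⟨hτ1, hτ2⟩ := hτ
    obtain ⟨r, r', hrr, hne⟩ := Function.not_injective_iff.1 hτ2
    rw [Finset.mem_biUnion]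
    exact ⟨(r, r'), Finset.mem_univ _, Finset.mem_filter.2 ⟨hτ1, hne, hrr⟩⟩
  calc (pf.filter (fun τ => ¬ Function.Injective τ)).card
      ≤ ((Finset.univ : Finset (Fin m × Fin m)).biUnion
        (fun p => pf.filter (fun τ => p.1 ≠ p.2 ∧ τ p.1 = τ p.2))).card :=
        Finset.card_le_card hsub
    _ ≤ ∑ p ∈ (Finset.univ : Finset (Fin m × Fin m)),
        (pf.filter (fun τ => p.1 ≠ p.2 ∧ τ p.1 = τ p.2)).card := Finset.card_biUnion_le
    _ ≤ ∑ _p ∈ (Finset.univ : Finset (Fin m × Fin m)), n ^ (m - 1) := by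
        apply Finset.sum_le_sum
        rintro ⟨r, r'⟩ _
        by_cases hrr : r = r'
        · subst hrr
          have : pf.filter (fun τ => r ≠ r ∧ τ r = τ r) = ∅ := by
            apply Finset.filter_false_of_mem
            intro τ _
            simp
          rw [this]
          simp
        · have hmpos : 0 < m := r.pos
          set pf2 := Fintype.piFinset (fun i : Fin m =>
            if i = r' then ({0} : Finset ℕ) else Finset.range n) with hpf2
          have hmap : ∀ τ ∈ pf.filter (fun τ => r ≠ r' ∧ τ r = τ r'),
              Function.update τ r' 0 ∈ pf2 := by
            intro τ hτ
            rw [Finset.mem_filter] at hτ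
            rw [hpf2, Fintype.mem_piFinset]
            intro i
            by_cases hi : i = r'
            · subst hi
              simp [Function.update_self]
            · rw [Function.update_of_ne hi]
              simp only [if_neg hi]
              exact Fintype.mem_piFinset.1 hτ.1 i
          have hinj : Set.InjOn (fun τ : Fin m → ℕ => Function.update τ r' 0)
              (↑(pf.filter (fun τ => r ≠ r' ∧ τ r = τ r')) : Set (Fin m → ℕ)) := by
            intro τ hτ τ' hτ' heq
            simp only [Finset.coe_filter, mem_setOf_eq] at hτ hτ'
            have hup : ∀ j : Fin m, Function.update τ r' 0 j = Function.update τ' r' 0 j :=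
              fun j => congrFun heq j
            funext j
            by_cases hj : j = r'
            · have h3 := hup r
              rw [Function.update_of_ne hrr, Function.update_of_ne hrr] at h3
              rw [hj, ← hτ.2.2, ← hτ'.2.2]
              exact h3
            · have h3 := hup j
              rwa [Function.update_of_ne hj, Function.update_of_ne hj] at h3
          have hcard2 : pf2.card = n ^ (m - 1) := by
            rw [hpf2, Fintype.card_piFinset]
            have : ∀ i : Fin m, ((if i = r' then ({0} : Finset ℕ) else Finset.range n)).card
                = if i = r' then 1 else n := by
              intro i; by_cases hi : i = r' <;> simp [hi]
            rw [Finset.prod_congr rfl (fun i _ => this i)]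
            rw [← Finset.mul_prod_erase Finset.univ _ (Finset.mem_univ r')]
            rw [if_pos rfl, one_mul]
            have herase : ∀ i ∈ Finset.univ.erase r', (if i = r' then 1 else n) = n := by
              intro i hi
              rw [if_neg (Finset.mem_erase.1 hi).1]
            rw [Finset.prod_congr rfl herase, Finset.prod_const, Finset.card_erase_of_mem
              (Finset.mem_univ r'), Finset.card_univ, Fintype.card_fin]
          calc (pf.filter (fun τ => r ≠ r' ∧ τ r = τ r')).card ≤ pf2.card :=
                Finset.card_le_card_of_injOn _ hmap hinj
            _ = n ^ (m - 1) := hcard2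
    _ = m * m * n ^ (m - 1) := by
        rw [Finset.sum_const, Finset.card_univ]
        simp [Fintype.card_prod, mul_assoc]

include hexch

/-- quantitative moment estimate -/
lemma moment_close (a b n : ℕ) (hn : 0 < n) :
    |∫ x, (avg n x) ^ a * (1 - avg n x) ^ b ∂P - cprobR P (a+b) a| ≤
      (((a+b) * (a+b) : ℕ) : ℝ) / n := by
  set m := a + b with hm
  set c := cprobR P m a with hc
  set pf := Fintype.piFinset (fun _ : Fin m => Finset.range n) with hpf
  have hnR : (0:ℝ) < n := by exact_mod_cast hn
  have hnm : (0:ℝ) < (n:ℝ) ^ m := pow_pos hnR m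
  have hcard : pf.card = n ^ m := by
    rw [hpf, Fintype.card_piFinset]
    simp
  have hcsum : c = ∑ _τ ∈ pf, c / (n:ℝ)^m := by
    rw [Finset.sum_const, hcard, nsmul_eq_mul]
    push_cast
    field_simp
  rw [moment_expand P a b n hn]
  conv_lhs => rw [hcsum]
  rw [← Finset.sum_sub_distrib]
  set f : (Fin m → ℕ) → ℝ := fun τ =>
    (P (cyl τ (fun r => decide ((r : ℕ) < a)))).toReal / (n:ℝ)^m - c / (n:ℝ)^m with hf
  have hvanish : ∀ τ ∈ pf, f τ ≠ 0 → ¬ Function.Injective τ := by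
    intro τ _ hfτ hinj
    apply hfτ
    have hP := P_cyl_eq_cprob P hexch τ hinj (fun r => decide ((r : ℕ) < a))
    have hfilter : (Finset.univ.filter
        (fun r : Fin m => (decide ((r : ℕ) < a)) = true)).card = a := by
      have hfeq : (Finset.univ.filter (fun r : Fin m => (decide ((r : ℕ) < a)) = true)) =
          (Finset.univ.filter (fun r : Fin m => (r : ℕ) < a)) := by
        apply Finset.filter_congr
        intro r _
        simp
      rw [hfeq]
      exact card_filter_lt (by omega)
    have hfin : (P (cyl τ (fun r => decide ((r : ℕ) < a)))).toReal = c := by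
      rw [hP, hfilter, hc]
      rfl
    simp only [hf, hfin]
    ring
  have hbound : ∀ τ ∈ pf.filter (fun τ => ¬ Function.Injective τ), |f τ| ≤ 1 / (n:ℝ)^m := by
    intro τ _
    simp only [hf]
    have h1 : (0:ℝ) ≤ (P (cyl τ (fun r => decide ((r : ℕ) < a)))).toReal :=
      ENNReal.toReal_nonneg
    have h2 : (P (cyl τ (fun r => decide ((r : ℕ) < a)))).toReal ≤ 1 := by
      calc (P (cyl τ _)).toReal ≤ (1 : ℝ≥0∞).toReal :=
            ENNReal.toReal_mono (by simp) (prob_le_one)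
        _ = 1 := by simp
    have h3 : 0 ≤ c := cprobR_nonneg P m a
    have h4 : c ≤ 1 := cprobR_le_one P m a
    rw [div_sub_div_same, abs_div, abs_of_pos hnm, div_le_div_iff₀ hnm hnm]
    have : |(P (cyl τ (fun r => decide ((r : ℕ) < a)))).toReal - c| ≤ 1 := by
      rw [abs_le]; constructor <;> linarith
    nlinarith
  calc |∑ τ ∈ pf, f τ| = |∑ τ ∈ pf.filter (fun τ => ¬ Function.Injective τ), f τ| := by
        rw [Finset.sum_filter_of_ne hvanish]
    _ ≤ ∑ τ ∈ pf.filter (fun τ => ¬ Function.Injective τ), |f τ| :=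
        Finset.abs_sum_le_sum_abs _ _
    _ ≤ ∑ _τ ∈ pf.filter (fun τ => ¬ Function.Injective τ), 1 / (n:ℝ)^m :=
        Finset.sum_le_sum hbound
    _ = ((pf.filter (fun τ => ¬ Function.Injective τ)).card : ℝ) * (1 / (n:ℝ)^m) := by
        rw [Finset.sum_const, nsmul_eq_mul]
    _ ≤ ((m * m * n ^ (m-1) : ℕ) : ℝ) * (1 / (n:ℝ)^m) := by
        apply mul_le_mul_of_nonneg_right _ (by positivity)
        exact_mod_cast noninj_card m n
    _ ≤ ((m * m : ℕ) : ℝ) / n := by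
        rcases Nat.eq_zero_or_pos m with hm0 | hm0
        · rw [hm0]; simp
        · have hpow : (n:ℝ)^m = (n:ℝ)^(m-1) * n := by
            rw [← pow_succ]
            congr 1
            omega
          rw [hpow]
          push_cast
          rw [div_eq_mul_inv, mul_inv]
          have hnp : (0:ℝ) < (n:ℝ)^(m-1) := pow_pos hnR _
          field_simp
          exact le_rfl

/-- convergence of Bernstein moments -/
lemma moment_tendsto (a b : ℕ) :
    Tendsto (fun n => ∫ x, (avg n x) ^ a * (1 - avg n x) ^ b ∂P) atTop
      (𝓝 (cprobR P (a+b) a)) := by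
  have h0 : Tendsto (fun n : ℕ => (((a+b) * (a+b) : ℕ) : ℝ) / n) atTop (𝓝 0) :=
    tendsto_const_div_atTop_nhds_zero_nat _
  have h1 : Tendsto (fun n => ∫ x, (avg n x) ^ a * (1 - avg n x) ^ b ∂P
      - cprobR P (a+b) a) atTop (𝓝 0) := by
    apply squeeze_zero_norm' _ h0
    filter_upwards [eventually_ge_atTop 1] with n hn
    exact moment_close P hexch a b n hn
  have := h1.add_const (cprobR P (a+b) a)
  simpa using this


/-- second-moment computations -/
lemma integral_Y (i : ℕ) : ∫ x, Y i x ∂P = cprobR P 1 1 := by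
  have hpt : ∀ x, Y i x = (cyl (fun _ : Fin 1 => i) (fun _ => true)).indicator 1 x := by
    intro x
    by_cases hx : x ∈ cyl (fun _ : Fin 1 => i) (fun _ => true)
    · rw [Set.indicator_of_mem hx]
      have := hx 0
      unfold Y
      simp [this]
    · rw [Set.indicator_of_notMem hx]
      simp only [cyl, mem_setOf_eq, not_forall] at hx
      obtain ⟨r, hr⟩ := hx
      unfold Y
      have : x i = false := by simpa using hr
      simp [this]
  rw [integral_congr_ae (ae_of_all _ hpt), integral_indicator_one (measurableSet_cyl _ _)]
  rw [measureReal_def, P_cyl_eq_cprob P hexch _ (fun u v _ => Subsingleton.elim u v) _]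
  congr 1

lemma integral_YY {i j : ℕ} (hij : i ≠ j) :
    ∫ x, Y i x * Y j x ∂P = cprobR P 2 2 := by
  set τ : Fin 2 → ℕ := fun r => if r = 0 then i else j with hτ
  have hτ0 : τ 0 = i := by simp [hτ]
  have hτ1 : τ 1 = j := by simp [hτ]
  have hmem : ∀ x : ℕ → Bool, x ∈ cyl τ (fun _ => true) ↔ (x i = true ∧ x j = true) := by
    intro x
    constructor
    · intro h
      exact ⟨by rw [← hτ0]; exact h 0, by rw [← hτ1]; exact h 1⟩
    · rintro ⟨h1, h2⟩ r
      fin_cases r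
      · simpa [hτ] using h1
      · simpa [hτ] using h2
  have hpt : ∀ x, Y i x * Y j x = (cyl τ (fun _ => true)).indicator 1 x := by
    intro x
    by_cases hx : x ∈ cyl τ (fun _ => true)
    · rw [Set.indicator_of_mem hx]
      obtain ⟨h1, h2⟩ := (hmem x).1 hx
      unfold Y
      simp [h1, h2]
    · rw [Set.indicator_of_notMem hx]
      rw [hmem x, not_and_or] at hx
      unfold Y
      rcases hx with hx | hx
      · have : x i = false := by simpa using hx
        simp [this]
      · have : x j = false := by simpa using hx
        simp [this]
  have hinj : Function.Injective τ := by
    intro u v huv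
    fin_cases u <;> fin_cases v <;> simp_all [hτ]
  rw [integral_congr_ae (ae_of_all _ hpt), integral_indicator_one (measurableSet_cyl _ _)]
  rw [measureReal_def, P_cyl_eq_cprob P hexch _ hinj _]
  congr 1

lemma integral_YY' (i j : ℕ) :
    ∫ x, Y i x * Y j x ∂P = if i = j then cprobR P 1 1 else cprobR P 2 2 := by
  by_cases h : i = j
  · subst h
    rw [if_pos rfl]
    have : ∀ x, Y i x * Y i x = Y i x := by
      intro x; unfold Y; split <;> norm_num
    rw [integral_congr_ae (ae_of_all _ this)]
    exact integral_Y P hexch i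
  · rw [if_neg h]
    exact integral_YY P hexch h

lemma integrable_YY (i j : ℕ) : Integrable (fun x => Y i x * Y j x) P := by
  apply integrable_bdd P ((measurable_Y i).mul (measurable_Y j)) 1
  intro x
  rw [Pi.mul_apply, abs_mul]
  have h1 := Y_nonneg i x; have h2 := Y_le_one i x
  have h3 := Y_nonneg j x; have h4 := Y_le_one j x
  rw [abs_of_nonneg h1, abs_of_nonneg h3]
  nlinarith

lemma integral_avg_mul (n m : ℕ) (hn : 0 < n) (hnm : n ≤ m) :
    ∫ x, avg n x * avg m x ∂P =
      cprobR P 2 2 + (cprobR P 1 1 - cprobR P 2 2) / m := by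
  set c1 := cprobR P 1 1
  set c2 := cprobR P 2 2
  have hmpos : 0 < m := lt_of_lt_of_le hn hnm
  have hnR : (0:ℝ) < n := by exact_mod_cast hn
  have hmR : (0:ℝ) < m := by exact_mod_cast hmpos
  have hpt : ∀ x, avg n x * avg m x =
      ∑ i ∈ Finset.range n, ∑ j ∈ Finset.range m, (Y i x * Y j x) / (n * m : ℝ) := by
    intro x
    rw [avg, avg, div_mul_div_comm, Finset.sum_mul_sum]
    rw [Finset.sum_div]
    apply Finset.sum_congr rfl
    intro i _
    rw [Finset.sum_div]
  rw [integral_congr_ae (ae_of_all _ hpt)]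
  rw [integral_finset_sum _ (fun i _ => integrable_finset_sum _
    (fun j _ => (integrable_YY P hexch i j).div_const _))]
  have hstep : ∀ i ∈ Finset.range n,
      (∫ x, ∑ j ∈ Finset.range m, (Y i x * Y j x) / (n * m : ℝ) ∂P) =
      ∑ j ∈ Finset.range m, (if i = j then c1 else c2) / (n * m : ℝ) := by
    intro i hi
    rw [integral_finset_sum _ (fun j _ => (integrable_YY P hexch i j).div_const _)]
    apply Finset.sum_congr rfl
    intro j _
    rw [integral_div, integral_YY' P hexch i j]
  rw [Finset.sum_congr rfl hstep]
  have hinner : ∀ i ∈ Finset.range n,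
      ∑ j ∈ Finset.range m, (if i = j then c1 else c2) / (n * m : ℝ) =
      (m * c2 + (c1 - c2)) / (n * m : ℝ) := by
    intro i hi
    rw [← Finset.sum_div]
    congr 1
    have : ∀ j ∈ Finset.range m, (if i = j then c1 else c2) =
        c2 + (if i = j then c1 - c2 else 0) := by
      intro j _; split <;> ring
    rw [Finset.sum_congr rfl this, Finset.sum_add_distrib, Finset.sum_const,
      Finset.card_range, Finset.sum_ite_eq, if_pos (Finset.mem_range.2
        (lt_of_lt_of_le (Finset.mem_range.1 hi) hnm))]
    push_cast
    ring
  rw [Finset.sum_congr rfl hinner, Finset.sum_const, Finset.card_range, nsmul_eq_mul]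
  field_simp

lemma cprob_two_le_one' : cprobR P 2 2 ≤ cprobR P 1 1 := by
  rw [cprobR, cprobR]
  apply ENNReal.toReal_mono (measure_ne_top _ _)
  apply measure_mono
  intro x hx r
  have h0 := hx ⟨(r : ℕ), by omega⟩
  have h1 : x (r : ℕ) = true := by simpa using h0
  have h2 : (r : ℕ) < 1 := r.isLt
  simpa [h2] using h1

lemma integral_sq_diff (n m : ℕ) (hn : 0 < n) (hnm : n ≤ m) :
    ∫ x, (avg n x - avg m x) ^ 2 ∂P ≤ 1 / n := by
  set c1 := cprobR P 1 1 with hc1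
  set c2 := cprobR P 2 2 with hc2
  have hmpos : 0 < m := lt_of_lt_of_le hn hnm
  have hnR : (0:ℝ) < n := by exact_mod_cast hn
  have hmR : (0:ℝ) < m := by exact_mod_cast hmpos
  have hint : ∀ k l : ℕ, Integrable (fun x => avg k x * avg l x) P := by
    intro k l
    apply integrable_bdd P ((measurable_avg k).mul (measurable_avg l)) 1
    intro x
    rw [Pi.mul_apply, abs_mul, abs_of_nonneg (avg_nonneg k x), abs_of_nonneg (avg_nonneg l x)]
    nlinarith [avg_le_one k x, avg_le_one l x, avg_nonneg k x, avg_nonneg l x]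
  have hpt : ∀ x, (avg n x - avg m x)^2 =
      avg n x * avg n x + avg m x * avg m x - 2 * (avg n x * avg m x) := by
    intro x; ring
  have hfint : Integrable (fun x => avg n x * avg n x + avg m x * avg m x) P :=
    (hint n n).add (hint m m)
  have hgint : Integrable (fun x => 2 * (avg n x * avg m x)) P := (hint n m).const_mul 2
  rw [integral_congr_ae (ae_of_all _ hpt), integral_sub hfint hgint,
    integral_add (hint n n) (hint m m), MeasureTheory.integral_const_mul 2 _,
    integral_avg_mul P hexch n n hn le_rfl, integral_avg_mul P hexch m m hmpos le_rfl,
    integral_avg_mul P hexch n m hn hnm]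
  have h12 : c2 ≤ c1 := cprob_two_le_one' P hexch
  have h1 : c1 ≤ 1 := cprobR_le_one P 1 1
  have h2 : 0 ≤ c2 := cprobR_nonneg P 2 2
  have ha : (c1 - c2)/(n:ℝ) ≤ 1/(n:ℝ) := by
    gcongr
    linarith
  have hb : (0:ℝ) ≤ (c1 - c2)/(m:ℝ) := div_nonneg (by linarith) hmR.le
  linarith


/-- the dyadic increments -/
noncomputable def dd (j : ℕ) (x : ℕ → Bool) : ℝ := avg (2^(j+1)) x - avg (2^j) x

omit hexch in
lemma measurable_dd (j : ℕ) : Measurable (dd j) :=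
  (measurable_avg (2^(j+1))).sub (measurable_avg (2^j))

omit hexch in
lemma abs_dd_le (j : ℕ) (x : ℕ → Bool) : |dd j x| ≤ 1 := by
  rw [dd, abs_sub_le_iff]
  constructor <;>
    nlinarith [avg_nonneg (2^(j+1)) x, avg_le_one (2^(j+1)) x,
      avg_nonneg (2^j) x, avg_le_one (2^j) x]

lemma integral_dd_sq (j : ℕ) : ∫ x, (dd j x) ^ 2 ∂P ≤ ((1:ℝ)/2) ^ j := by
  have h1 : ∀ x, (dd j x)^2 = (avg (2^j) x - avg (2^(j+1)) x)^2 := by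
    intro x; rw [dd]; ring
  rw [integral_congr_ae (ae_of_all _ h1)]
  have h2 := integral_sq_diff P hexch (2^j) (2^(j+1))
    (pow_pos (by norm_num) j) (Nat.pow_le_pow_right (by norm_num) (by omega))
  refine le_trans h2 (le_of_eq ?_)
  push_cast
  rw [one_div_pow]

/-- the bad sets -/
def badSet (j : ℕ) : Set (ℕ → Bool) := {x | ((3:ℝ)/4) ^ j ≤ |dd j x|}

lemma P_badSet_le (j : ℕ) : P (badSet j) ≤ ENNReal.ofReal (((8:ℝ)/9) ^ j) := by
  set ε : ℝ≥0∞ := ENNReal.ofReal ((((3:ℝ)/4) ^ j) ^ 2) with hε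
  have hεpos : 0 < (((3:ℝ)/4) ^ j) ^ 2 := by positivity
  have hε0 : ε ≠ 0 := by
    rw [hε, ne_eq, ENNReal.ofReal_eq_zero, not_le]
    exact hεpos
  have hεtop : ε ≠ ⊤ := ENNReal.ofReal_ne_top
  have hIdd : Integrable (fun x => (dd j x)^2) P := by
    apply integrable_bdd P ((measurable_dd j).pow_const 2) 1
    intro x
    rw [abs_of_nonneg (sq_nonneg _)]
    nlinarith [abs_dd_le j x, abs_nonneg (dd j x), sq_abs (dd j x)]
  have hsub : badSet j ⊆ {x | ε ≤ ENNReal.ofReal ((dd j x)^2)} := by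
    intro x hx
    rw [mem_setOf_eq, hε]
    apply ENNReal.ofReal_le_ofReal
    have h := hx
    rw [badSet, mem_setOf_eq] at h
    calc (((3:ℝ)/4) ^ j) ^ 2 ≤ |dd j x| ^ 2 := by
          apply pow_le_pow_left₀ (by positivity) h
      _ = (dd j x) ^ 2 := sq_abs _
  have hcheb : ε * P (badSet j) ≤ ∫⁻ x, ENNReal.ofReal ((dd j x)^2) ∂P := by
    calc ε * P (badSet j) ≤ ε * P {x | ε ≤ ENNReal.ofReal ((dd j x)^2)} := by
          apply mul_le_mul_right (measure_mono hsub)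
      _ ≤ ∫⁻ x, ENNReal.ofReal ((dd j x)^2) ∂P :=
          mul_meas_ge_le_lintegral₀
            ((measurable_dd j).pow_const 2).ennreal_ofReal.aemeasurable ε
  have hlint : ∫⁻ x, ENNReal.ofReal ((dd j x)^2) ∂P ≤ ENNReal.ofReal (((1:ℝ)/2)^j) := by
    rw [← ofReal_integral_eq_lintegral_ofReal hIdd (ae_of_all _ (fun x => sq_nonneg _))]
    exact ENNReal.ofReal_le_ofReal (integral_dd_sq P hexch j)
  have hP : P (badSet j) ≤ ENNReal.ofReal (((1:ℝ)/2)^j) / ε := by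
    rw [ENNReal.le_div_iff_mul_le (Or.inl hε0) (Or.inl hεtop)]
    calc P (badSet j) * ε = ε * P (badSet j) := mul_comm _ _
      _ ≤ _ := le_trans hcheb hlint
  refine le_trans hP (le_of_eq ?_)
  rw [hε, ← ENNReal.ofReal_div_of_pos hεpos]
  congr 1
  rw [div_eq_iff (ne_of_gt hεpos), ← pow_mul, mul_comm j 2, pow_mul, ← mul_pow]
  norm_num

/-- almost sure convergence of the dyadic averages -/
lemma ae_tendsto_avg : ∀ᵐ x ∂P, ∃ l ∈ Icc (0:ℝ) 1,
    Tendsto (fun j => avg (2^j) x) atTop (𝓝 l) := by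
  have htsum : ∑' j, P (badSet j) ≠ ⊤ := by
    apply ne_top_of_le_ne_top ?_ (ENNReal.tsum_le_tsum (fun j => P_badSet_le P hexch j))
    have : ∀ j : ℕ, ENNReal.ofReal (((8:ℝ)/9) ^ j) = (ENNReal.ofReal ((8:ℝ)/9)) ^ j :=
      fun j => ENNReal.ofReal_pow (by norm_num) j
    rw [tsum_congr this, ENNReal.tsum_geometric]
    rw [ne_eq, ENNReal.inv_eq_top, tsub_eq_zero_iff_le, not_le]
    exact ENNReal.ofReal_lt_one.2 (by norm_num)
  filter_upwards [ae_eventually_notMem htsum] with x hx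
  rw [eventually_atTop] at hx
  obtain ⟨J, hJ⟩ := hx
  have hgeo : ∀ i : ℕ, dist (avg (2^(i+J)) x) (avg (2^((i+1)+J)) x) ≤
      ((3:ℝ)/4)^J * ((3:ℝ)/4)^i := by
    intro i
    have h1 := hJ (i + J) (by omega)
    rw [badSet, mem_setOf_eq, not_le] at h1
    rw [Real.dist_eq]
    have h2 : avg (2^(i+J)) x - avg (2^((i+1)+J)) x = - dd (i+J) x := by
      rw [dd]
      have : (i + J) + 1 = (i+1) + J := by omega
      rw [this]
      ring
    rw [h2, abs_neg]
    calc |dd (i+J) x| ≤ ((3:ℝ)/4)^(i+J) := le_of_lt h1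
      _ = ((3:ℝ)/4)^J * ((3:ℝ)/4)^i := by rw [pow_add]; ring
  have hcauchy : CauchySeq (fun i => avg (2^(i+J)) x) :=
    cauchySeq_of_le_geometric ((3:ℝ)/4) (((3:ℝ)/4)^J) (by norm_num) hgeo
  obtain ⟨l, hl⟩ := cauchySeq_tendsto_of_complete hcauchy
  have hl' : Tendsto (fun i => avg (2^i) x) atTop (𝓝 l) :=
    (tendsto_add_atTop_iff_nat J).1 hl
  refine ⟨l, ⟨?_, ?_⟩, hl'⟩
  · exact ge_of_tendsto hl' (Eventually.of_forall (fun i => avg_nonneg _ x))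
  · exact le_of_tendsto hl' (Eventually.of_forall (fun i => avg_le_one _ x))

/-- the limiting frequency, clamped to [0,1] -/
noncomputable def Zc (x : ℕ → Bool) : ℝ :=
  max 0 (min 1 (Filter.limsup (fun j => avg (2^j) x) atTop))

omit hexch in
lemma measurable_Zc : Measurable Zc := by
  apply Measurable.max measurable_const
  apply Measurable.min measurable_const
  exact Measurable.limsup (fun j => measurable_avg (2^j))

omit hexch in
lemma Zc_mem (x : ℕ → Bool) : Zc x ∈ Icc (0:ℝ) 1 := by
  constructor
  · exact le_max_left _ _
  · exact max_le zero_le_one (min_le_left _ _)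

lemma ae_tendsto_Zc : ∀ᵐ x ∂P, Tendsto (fun j => avg (2^j) x) atTop (𝓝 (Zc x)) := by
  filter_upwards [ae_tendsto_avg P hexch] with x hx
  obtain ⟨l, hmem, hl⟩ := hx
  have hls : Filter.limsup (fun j => avg (2^j) x) atTop = l := hl.limsup_eq
  have : Zc x = l := by
    rw [Zc, hls, min_eq_right hmem.2, max_eq_right hmem.1]
  rw [this]
  exact hl

/-- moments of the limit frequency -/
lemma integral_Zc_pow (a b : ℕ) :
    ∫ x, (Zc x) ^ a * (1 - Zc x) ^ b ∂P = cprobR P (a+b) a := by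
  have h1 : Tendsto (fun j => ∫ x, (avg (2^j) x) ^ a * (1 - avg (2^j) x) ^ b ∂P)
      atTop (𝓝 (cprobR P (a+b) a)) :=
    (moment_tendsto P hexch a b).comp (tendsto_pow_atTop_atTop_of_one_lt one_lt_two)
  have h2 : Tendsto (fun j => ∫ x, (avg (2^j) x) ^ a * (1 - avg (2^j) x) ^ b ∂P)
      atTop (𝓝 (∫ x, (Zc x) ^ a * (1 - Zc x) ^ b ∂P)) := by
    apply tendsto_integral_of_dominated_convergence (fun _ => (1:ℝ))
    · intro j
      exact (((measurable_avg (2^j)).pow_const a).mul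
        ((measurable_const.sub (measurable_avg (2^j))).pow_const b)).aestronglyMeasurable
    · exact integrable_const 1
    · intro j
      apply ae_of_all
      intro x
      have h01 := avg_nonneg (2^j) x
      have h11 := avg_le_one (2^j) x
      rw [Real.norm_eq_abs, abs_mul, abs_pow, abs_pow]
      rw [abs_of_nonneg h01, abs_of_nonneg (by linarith : 0 ≤ 1 - avg (2^j) x)]
      calc (avg (2^j) x)^a * (1 - avg (2^j) x)^b ≤ 1 * 1 := by
            apply mul_le_mul
            · exact pow_le_one₀ (by linarith) (by linarith)
            · exact pow_le_one₀ (by linarith) (by linarith)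
            · exact pow_nonneg (by linarith) _
            · norm_num
        _ = 1 := by norm_num
    · filter_upwards [ae_tendsto_Zc P hexch] with x hx
      exact ((hx.pow a).mul ((tendsto_const_nhds.sub hx).pow b))
  exact tendsto_nhds_unique h2 h1

end Exch
end DeFinettiAux

namespace DeFinettiAux
open scoped Classical

/-- the generating π-system of cylinder sets -/
def CylSet : Set (Set (ℕ → Bool)) :=
  {S | ∃ (s : Finset ℕ) (g : ℕ → Bool), S = {x | ∀ i ∈ s, x i = g i}}

lemma generateFrom_cylSet :
    (inferInstance : MeasurableSpace (ℕ → Bool)) = MeasurableSpace.generateFrom CylSet := by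
  apply le_antisymm
  · rw [show (inferInstance : MeasurableSpace (ℕ → Bool)) =
      ⨆ i, MeasurableSpace.comap (fun x : ℕ → Bool => x i) ⊤ from rfl]
    apply iSup_le
    intro i S hS
    obtain ⟨t, -, rfl⟩ := hS
    have hdec : (fun x : ℕ → Bool => x i) ⁻¹' t = ⋃ b ∈ t, {x : ℕ → Bool | x i = b} := by
      ext x
      simp
    rw [hdec]
    apply @MeasurableSet.biUnion _ _ (MeasurableSpace.generateFrom CylSet) _ _ (t.to_countable)
    intro b _
    apply MeasurableSpace.measurableSet_generateFrom
    refine ⟨{i}, fun _ => b, ?_⟩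
    ext x
    simp
  · apply MeasurableSpace.generateFrom_le
    rintro S ⟨s, g, rfl⟩
    have : {x : ℕ → Bool | ∀ i ∈ s, x i = g i} =
        ⋂ i ∈ (s : Set ℕ), (fun x : ℕ → Bool => x i) ⁻¹' {g i} := by
      ext x; simp
    rw [this]
    exact MeasurableSet.biInter (s : Set ℕ).to_countable
      (fun i _ => (measurable_pi_apply i) (by measurability))

lemma isPiSystem_cylSet : IsPiSystem CylSet := by
  rintro S ⟨s, g, rfl⟩ T ⟨t, h, rfl⟩ hne
  obtain ⟨x₀, hx₀⟩ := hne
  refine ⟨s ∪ t, fun i => if i ∈ s then g i else h i, ?_⟩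
  have hagree : ∀ i, i ∈ s → i ∈ t → g i = h i := by
    intro i his hit
    have h1 := hx₀.1 i his
    have h2 := hx₀.2 i hit
    rw [← h1, ← h2]
  ext x
  simp only [mem_inter_iff, mem_setOf_eq, Finset.mem_union]
  constructor
  · rintro ⟨h1, h2⟩ i hi
    by_cases his : i ∈ s
    · simpa [his] using h1 i his
    · rcases hi with hi | hi
      · exact absurd hi his
      · simpa [his] using h2 i hi
  · intro hx
    constructor
    · intro i his
      have := hx i (Or.inl his)
      simpa [his] using this
    · intro i hit
      by_cases his : i ∈ s
      · have := hx i (Or.inl his)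
        rw [← hagree i his hit]
        simpa [his] using this
      · have := hx i (Or.inr hit)
        simpa [his] using this

section Final

variable (P : Measure (ℕ → Bool)) [IsProbabilityMeasure P]
variable (hexch : ∀ σ : Equiv.Perm ℕ, {n | σ n ≠ n}.Finite →
      ∀ A : Set (ℕ → Bool), MeasurableSet A →
        P ((fun x n => x (σ.symm n)) ⁻¹' A) = P A)

include hexch

/-- cylinder probability of P in terms of the mixing function -/
lemma P_cylSet (s : Finset ℕ) (g : ℕ → Bool) :
    P {x | ∀ i ∈ s, x i = g i} =
      ENNReal.ofReal (cprobR P s.card ((s.filter (fun i => g i = true)).card)) := by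
  set m := s.card with hm
  set ι : Fin m → ℕ := fun r => ((s.orderIsoOfFin rfl r : {x // x ∈ s}) : ℕ) with hι
  have hmem : ∀ r, ι r ∈ s := fun r => (s.orderIsoOfFin rfl r).2
  have hinj : Function.Injective ι := fun a b hab => by
    apply (s.orderIsoOfFin rfl).injective
    exact Subtype.ext hab
  have hsurj : ∀ i ∈ s, ∃ r, ι r = i := by
    intro i hi
    obtain ⟨r, hr⟩ := (s.orderIsoOfFin rfl).surjective ⟨i, hi⟩
    exact ⟨r, congrArg Subtype.val hr⟩
  set w : Fin m → Bool := fun r => g (ι r) with hw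
  have hset : {x : ℕ → Bool | ∀ i ∈ s, x i = g i} = cyl ι w := by
    ext x
    constructor
    · intro hx r
      exact hx (ι r) (hmem r)
    · intro hx i hi
      obtain ⟨r, rfl⟩ := hsurj i hi
      exact hx r
  rw [hset, P_cyl_eq_cprob P hexch ι hinj w]
  have hcount : (Finset.univ.filter (fun r => w r = true)).card =
      (s.filter (fun i => g i = true)).card := by
    apply Finset.card_bij (fun r _ => ι r)
    · intro r hr
      rw [Finset.mem_filter] at hr ⊢
      exact ⟨hmem r, hr.2⟩
    · intro r _ r' _ hrr
      exact hinj hrr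
    · intro i hi
      rw [Finset.mem_filter] at hi
      obtain ⟨r, rfl⟩ := hsurj i hi.1
      refine ⟨r, ?_, rfl⟩
      rw [Finset.mem_filter]
      exact ⟨Finset.mem_univ r, hi.2⟩
  rw [hcount]
  exact (ENNReal.ofReal_toReal (measure_ne_top _ _)).symm

-- cylinder probability of the product measures
omit hexch in
lemma Qm_cylSet {θ : ℝ} (h0 : 0 ≤ θ) (h1 : θ ≤ 1) (s : Finset ℕ) (g : ℕ → Bool) :
    Qm θ {x | ∀ i ∈ s, x i = g i} =
      ENNReal.ofReal θ ^ ((s.filter (fun i => g i = true)).card) *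
      ENNReal.ofReal (1 - θ) ^ ((s.filter (fun i => ¬ (g i = true))).card) := by
  have h2 := (Qm_isIIDProduct h0 h1).2 s (fun i => {g i}) (fun i => by measurability)
  have hset : {x : ℕ → Bool | ∀ i ∈ s, x i ∈ ({g i} : Set Bool)} =
      {x : ℕ → Bool | ∀ i ∈ s, x i = g i} := by
    ext x; simp
  rw [hset] at h2
  rw [h2]
  have hb : ∀ i ∈ s, bernoulliMeasure θ ({g i} : Set Bool) =
      (if g i = true then ENNReal.ofReal θ else ENNReal.ofReal (1 - θ)) := by
    intro i _
    rw [bernoulli_apply θ h0 h1]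
    cases hgi : g i
    · simp only [Bool.false_eq_true, if_false]
      congr 1
      unfold mass
      simp
    · simp only [if_true]
      congr 1
      unfold mass
      simp
  rw [Finset.prod_congr rfl hb, Finset.prod_ite (fun _ => ENNReal.ofReal θ)
    (fun _ => ENNReal.ofReal (1 - θ)), Finset.prod_const, Finset.prod_const]

end Final
end DeFinettiAux


/-- **Classical de Finetti theorem for binary sequences.**  Every exchangeable
probability measure on `ℕ → Bool` is a mixture of i.i.d. Bernoulli laws, where
the mixing measure `μ` lives on `[0, 1]`. -/
theorem deFinetti_binary (P : Measure (ℕ → Bool)) [IsProbabilityMeasure P]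
    (hexch : ∀ σ : Equiv.Perm ℕ, {n | σ n ≠ n}.Finite →
      ∀ A : Set (ℕ → Bool), MeasurableSet A →
        P ((fun x n => x (σ.symm n)) ⁻¹' A) = P A) :
    ∃ μ : Measure (Set.Icc (0 : ℝ) 1),
      IsProbabilityMeasure μ ∧
      ∃ Q : Set.Icc (0 : ℝ) 1 → Measure (ℕ → Bool),
        (∀ θ : Set.Icc (0 : ℝ) 1, IsIIDProduct (bernoulliMeasure θ.1) (Q θ)) ∧
        ∀ A : Set (ℕ → Bool), MeasurableSet A →
          P A = ∫⁻ θ, Q θ A ∂μ := by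
  classical
  open DeFinettiAux in
  have hZI : Measurable (fun x => (⟨Zc x, Zc_mem x⟩ : Set.Icc (0:ℝ) 1)) :=
    Measurable.subtype_mk measurable_Zc
  set μ : Measure (Set.Icc (0:ℝ) 1) :=
    P.map (fun x => (⟨Zc x, Zc_mem x⟩ : Set.Icc (0:ℝ) 1)) with hμdef
  have hμ : IsProbabilityMeasure μ := Measure.isProbabilityMeasure_map hZI.aemeasurable
  set Q : Set.Icc (0:ℝ) 1 → Measure (ℕ → Bool) := fun θ => Qm θ.1 with hQdef
  have hQ : ∀ θ : Set.Icc (0:ℝ) 1, IsIIDProduct (bernoulliMeasure θ.1) (Q θ) :=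
    fun θ => Qm_isIIDProduct θ.2.1 θ.2.2
  refine ⟨μ, hμ, Q, hQ, ?_⟩
  have main : ∀ A : Set (ℕ → Bool), MeasurableSet A →
      (Measurable (fun θ : Set.Icc (0:ℝ) 1 => Q θ A) ∧ P A = ∫⁻ θ, Q θ A ∂μ) := by
    refine fun A hA => MeasurableSpace.induction_on_inter
      (C := fun S _ => (Measurable fun θ : Set.Icc (0:ℝ) 1 => Q θ S) ∧
        P S = ∫⁻ θ, Q θ S ∂μ)
      generateFrom_cylSet isPiSystem_cylSet ?hempty ?hbasic ?hcompl ?hunion A hA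
    case hempty =>
      constructor
      · simp only [measure_empty]
        exact measurable_const
      · simp
    case hbasic =>
      rintro S ⟨s, g, rfl⟩
      set k := (s.filter (fun i => g i = true)).card with hk
      set l := (s.filter (fun i => ¬ (g i = true))).card with hl
      have hkl : k + l = s.card := Finset.card_filter_add_card_filter_not _
      have hQval : ∀ θ : Set.Icc (0:ℝ) 1, Q θ {x | ∀ i ∈ s, x i = g i} =
          ENNReal.ofReal θ.1 ^ k * ENNReal.ofReal (1 - θ.1) ^ l :=
        fun θ => Qm_cylSet θ.2.1 θ.2.2 s g
      constructor
      · rw [show (fun θ : Set.Icc (0:ℝ) 1 => Q θ {x | ∀ i ∈ s, x i = g i}) =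
          (fun θ : Set.Icc (0:ℝ) 1 => ENNReal.ofReal θ.1 ^ k *
            ENNReal.ofReal (1 - θ.1) ^ l) from funext hQval]
        apply Measurable.fun_mul
        · exact (ENNReal.measurable_ofReal.comp measurable_subtype_coe).pow_const k
        · exact (ENNReal.measurable_ofReal.comp
            (measurable_const.sub measurable_subtype_coe)).pow_const l
      · rw [P_cylSet P hexch s g]
        rw [hμdef, lintegral_map ?hmf hZI]
        case hmf =>
          rw [show (fun θ : Set.Icc (0:ℝ) 1 => Q θ {x | ∀ i ∈ s, x i = g i}) =
            (fun θ : Set.Icc (0:ℝ) 1 => ENNReal.ofReal θ.1 ^ k *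
              ENNReal.ofReal (1 - θ.1) ^ l) from funext hQval]
          apply Measurable.fun_mul
          · exact (ENNReal.measurable_ofReal.comp measurable_subtype_coe).pow_const k
          · exact (ENNReal.measurable_ofReal.comp
              (measurable_const.sub measurable_subtype_coe)).pow_const l
        have hpt : ∀ x : ℕ → Bool,
            Q (⟨Zc x, Zc_mem x⟩ : Set.Icc (0:ℝ) 1) {y | ∀ i ∈ s, y i = g i} =
            ENNReal.ofReal ((Zc x) ^ k * (1 - Zc x) ^ l) := by
          intro x
          rw [hQval ⟨Zc x, Zc_mem x⟩]
          have hz := Zc_mem x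
          rw [ENNReal.ofReal_mul (pow_nonneg hz.1 k), ENNReal.ofReal_pow hz.1,
            ENNReal.ofReal_pow (by linarith [hz.2])]
        rw [lintegral_congr hpt]
        have hIbd : Integrable (fun x => (Zc x) ^ k * (1 - Zc x) ^ l) P := by
          apply integrable_bdd P ((measurable_Zc.pow_const k).mul
            ((measurable_const.sub measurable_Zc).pow_const l)) 1
          intro x
          have hz := Zc_mem x
          show |Zc x ^ k * (1 - Zc x) ^ l| ≤ 1
          rw [abs_mul, abs_pow, abs_pow, abs_of_nonneg hz.1,
            abs_of_nonneg (by linarith [hz.2] : (0:ℝ) ≤ 1 - Zc x)]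
          calc (Zc x) ^ k * (1 - Zc x) ^ l ≤ 1 * 1 := by
                apply mul_le_mul
                · exact pow_le_one₀ (by linarith [hz.1]) (by linarith [hz.2])
                · exact pow_le_one₀ (by linarith [hz.2]) (by linarith [hz.1])
                · exact pow_nonneg (by linarith [hz.2]) _
                · norm_num
            _ = 1 := by norm_num
        rw [← ofReal_integral_eq_lintegral_ofReal hIbd (ae_of_all _ (fun x => by
          have hz := Zc_mem x
          exact mul_nonneg (pow_nonneg hz.1 k)
            (pow_nonneg (by linarith [hz.2]) l)))]
        congr 1
        have := integral_Zc_pow P hexch k l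
        rw [this]
        congr 1
        omega
    case hcompl =>
      intro t ht iht
      obtain ⟨ihm, ihp⟩ := iht
      have hq1 : ∀ θ : Set.Icc (0:ℝ) 1, Q θ tᶜ = 1 - Q θ t := by
        intro θ
        have : IsProbabilityMeasure (Q θ) := (hQ θ).1
        rw [measure_compl ht (measure_ne_top _ _), measure_univ]
      constructor
      · rw [show (fun θ : Set.Icc (0:ℝ) 1 => Q θ tᶜ) =
          (fun θ : Set.Icc (0:ℝ) 1 => 1 - Q θ t) from funext hq1]
        exact measurable_const.sub ihm
      · have hle : ∀ θ : Set.Icc (0:ℝ) 1, Q θ t ≤ 1 := by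
          intro θ
          have : IsProbabilityMeasure (Q θ) := (hQ θ).1
          exact prob_le_one
        have hne : ∫⁻ θ, Q θ t ∂μ ≠ ⊤ := by
          apply ne_top_of_le_ne_top (b := 1) (by simp)
          calc ∫⁻ θ, Q θ t ∂μ ≤ ∫⁻ _θ, 1 ∂μ := lintegral_mono hle
            _ = 1 := by simp
        rw [lintegral_congr hq1, lintegral_sub ihm hne (ae_of_all _ hle)]
        have h1 : IsProbabilityMeasure P := inferInstance
        rw [lintegral_one, measure_univ, ← ihp, measure_compl ht (measure_ne_top _ _),
          measure_univ]
    case hunion =>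
      intro f hdisj hmeas ih
      have hq : ∀ θ : Set.Icc (0:ℝ) 1, Q θ (⋃ i, f i) = ∑' i, Q θ (f i) :=
        fun θ => measure_iUnion hdisj hmeas
      constructor
      · rw [show (fun θ : Set.Icc (0:ℝ) 1 => Q θ (⋃ i, f i)) =
          (fun θ : Set.Icc (0:ℝ) 1 => ∑' i, Q θ (f i)) from funext hq]
        exact Measurable.ennreal_tsum (fun i => (ih i).1)
      · rw [lintegral_congr hq, lintegral_tsum (fun i => ((ih i).1).aemeasurable),
          measure_iUnion hdisj hmeas]
        exact tsum_congr (fun i => (ih i).2)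
  exact fun A hA => (main A hA).2
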